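/- Let G = (V, E, w) be a weighted hypergraph with positive degrees, let λ > 0 and x' ∈ ℝ^V. A vector x ∈ ℝ^V satisfies x − x' ∈ −λ 𝓛_G(x) if and only if z := D⁻¹x is the unique minimizer over ℝ^V of the strictly convex function F(z) = (λ/2) ∑_{e ∈ E} w(e) f_e(z)² + (1/2) ∑_{v ∈ V} (z(v) − (D⁻¹x')(v))² d(v), where f_e(z) = max_{u ∈ e} z(u) − min_{u ∈ e} z(u). In particular, for every x' the equation x − x' ∈ −λ 𝓛_G(x) has exactly one solution x. -/

import Mathlib

open Finset
open scoped Classical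

structure WHG (V : Type) [Fintype V] [DecidableEq V] where
  E : Type
  [fintypeE : Fintype E]
  mem : E → Finset V
  mem_nonempty : ∀ e, (mem e).Nonempty
  w : E → ℝ
  w_pos : ∀ e, 0 < w e

namespace WHG

attribute [instance] WHG.fintypeE

variable {V : Type} [Fintype V] [DecidableEq V] (G : WHG V)

/-- Degree of a vertex. -/
noncomputable def deg (v : V) : ℝ := ∑ e : G.E, if v ∈ G.mem e then G.w e else 0

/-- Volume of a vertex set. -/
noncomputable def vol (S : Finset V) : ℝ := ∑ v ∈ S, G.deg v

/-- Euclidean dot product. -/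
def dot (x y : V → ℝ) : ℝ := ∑ v, x v * y v

/-- Inner product weighted by `D⁻¹`. -/
noncomputable def innerD (x y : V → ℝ) : ℝ := ∑ v, x v * y v / G.deg v

/-- Norm associated to `innerD`. -/
noncomputable def normD (x : V → ℝ) : ℝ := Real.sqrt (G.innerD x x)

/-- `D⁻¹ x`. -/
noncomputable def Dinv (x : V → ℝ) : V → ℝ := fun v => x v / G.deg v

/-- Base polytope `B_e`. -/
def base (e : G.E) : Set (V → ℝ) :=
  convexHull ℝ {b : V → ℝ | ∃ u ∈ G.mem e, ∃ v ∈ G.mem e, b = Pi.single u 1 - Pi.single v 1}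

/-- Multi-valued hypergraph Laplacian `L_G`. -/
def Lap (x : V → ℝ) : Set (V → ℝ) :=
  {y | ∃ b : G.E → V → ℝ,
    (∀ e, b e ∈ G.base e ∧ ∀ b' ∈ G.base e, dot b' x ≤ dot (b e) x) ∧
    y = ∑ e : G.E, (G.w e * dot (b e) x) • b e}

/-- Normalized Laplacian `𝓛_G`. -/
noncomputable def nLap (x : V → ℝ) : Set (V → ℝ) := G.Lap (G.Dinv x)

/-- Total weight of hyperedges crossing `S`. -/
noncomputable def cut (S : Finset V) : ℝ :=
  ∑ e : G.E, if (G.mem e ∩ S).Nonempty ∧ (G.mem e \ S).Nonempty then G.w e else 0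

/-- Conductance of a vertex set. -/
noncomputable def cond (S : Finset V) : ℝ := G.cut S / min (G.vol S) (G.vol Sᶜ)

/-- Conductance of the hypergraph. -/
noncomputable def condG : ℝ :=
  sInf {c | ∃ S : Finset V, S.Nonempty ∧ S ≠ Finset.univ ∧ c = G.cond S}

/-- Connectivity of a hypergraph. -/
def Connected : Prop :=
  ∀ S : Finset V, S.Nonempty → S ≠ Finset.univ →
    ∃ e : G.E, (G.mem e ∩ S).Nonempty ∧ (G.mem e \ S).Nonempty

/-- The stationary vector `π`. -/
noncomputable def piVec : V → ℝ := fun v => G.deg v / G.vol Finset.univ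

/-- Solution of the heat equation `(HE; s)`. -/
def IsHeatSol (s : V → ℝ) (ρ : ℝ → V → ℝ) : Prop :=
  (∃ K : NNReal, LipschitzOnWith K ρ (Set.Ici 0)) ∧ ρ 0 = s ∧
  (∀ᵐ t : ℝ ∂MeasureTheory.volume, 0 ≤ t → ∃ y ∈ G.nLap (ρ t), HasDerivAt ρ (-y) t)

/-- Sweep sets of a vector. -/
def sweep (x : V → ℝ) : Set (Finset V) :=
  {S | ∃ τ : ℝ, S = Finset.univ.filter (fun v => τ ≤ x v) ∨
                S = Finset.univ.filter (fun v => x v ≤ τ)}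

/-- `κ_{T,t}`: the least conductance of nontrivial sweep sets of `ρ_ξ`, `ξ ∈ [T,t]`. -/
noncomputable def kappa (ρ : ℝ → V → ℝ) (T t : ℝ) : ℝ :=
  sInf {c | ∃ ξ ∈ Set.Icc T t, ∃ S ∈ sweep (ρ ξ),
    S.Nonempty ∧ S ≠ Finset.univ ∧ c = G.cond S}

/-- The family `𝒢(G, x)` of collapsed weighted graphs. -/
def GraphFamily (x : V → ℝ) (A : Matrix V V ℝ) : Prop :=
  A.IsSymm ∧ (∀ u v, 0 ≤ A u v) ∧ (∀ v, ∑ u, A v u = G.deg v) ∧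
  ∃ w' : G.E → V → V → ℝ,
    (∀ e u v, 0 ≤ w' e u v) ∧
    (∀ e u v, w' e u v ≠ 0 →
      (u ∈ G.mem e ∧ ∀ u' ∈ G.mem e, x u' ≤ x u) ∧
      (v ∈ G.mem e ∧ ∀ v' ∈ G.mem e, x v ≤ x v')) ∧
    (∀ e, ∑ u : V, ∑ v : V, w' e u v = G.w e) ∧
    (∀ u v, u ≠ v → A u v = ∑ e : G.E, (w' e u v + w' e v u))



set_option linter.unusedSectionVars false
set_option maxHeartbeats 1000000

section Aux

lemma inf'_eq_neg_sup' (s : Finset V) (hs : s.Nonempty) (f : V → ℝ) :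
    s.inf' hs f = - s.sup' hs (fun u => - f u) := by
  apply le_antisymm
  · rw [le_neg]
    exact Finset.sup'_le _ _ fun u hu => neg_le_neg (Finset.inf'_le f hu)
  · exact Finset.le_inf' _ _ fun u hu => by
      have := Finset.le_sup' (fun u => - f u) hu
      linarith

lemma danskin_sup (s : Finset V) (hs : s.Nonempty) (z h : V → ℝ)
    (U : Finset V) (hUdef : U = s.filter fun u => z u = s.sup' hs z) (hU : U.Nonempty) :
    ∃ δ > 0, ∀ t : ℝ, 0 < t → t ≤ δ →
      s.sup' hs (fun u => z u + t * h u) ≤ s.sup' hs z + t * U.sup' hU h := by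
  set M := s.sup' hs z with hM
  set A := U.sup' hU h with hA
  have hUz : ∀ u ∈ U, z u = M := by
    intro u hu; rw [hUdef] at hu; exact (Finset.mem_filter.1 hu).2
  have hUs : ∀ u ∈ U, u ∈ s := by
    intro u hu; rw [hUdef] at hu; exact (Finset.mem_filter.1 hu).1
  by_cases hSU : (s \ U).Nonempty
  · set ε := (s \ U).inf' hSU (fun u => M - z u) with hε
    have hεpos : 0 < ε := by
      rw [hε, Finset.lt_inf'_iff]
      intro u hu
      obtain ⟨hus, huU⟩ := Finset.mem_sdiff.1 hu
      have h1 : z u ≤ M := Finset.le_sup' z hus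
      have h2 : z u ≠ M := by
        intro hcon
        exact huU (by rw [hUdef]; exact Finset.mem_filter.2 ⟨hus, hcon⟩)
      have := lt_of_le_of_ne h1 h2
      linarith
    set C := s.sup' hs (fun u => |h u - A|) with hC
    have hC0 : 0 ≤ C := by
      obtain ⟨u, hu⟩ := hs
      exact (abs_nonneg _).trans (Finset.le_sup' (fun u => |h u - A|) hu)
    refine ⟨ε / (C + 1), by positivity, ?_⟩
    intro t ht htδ
    apply Finset.sup'_le
    intro u hu
    by_cases huU : u ∈ U
    · have h1 : h u ≤ A := Finset.le_sup' h huU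
      have := hUz u huU
      nlinarith
    · have h1 : ε ≤ M - z u := Finset.inf'_le _ (Finset.mem_sdiff.2 ⟨hu, huU⟩)
      have h2 : |h u - A| ≤ C := Finset.le_sup' (fun u => |h u - A|) hu
      have h3 : t * (h u - A) ≤ t * |h u - A| :=
        mul_le_mul_of_nonneg_left (le_abs_self _) ht.le
      have h4 : t * |h u - A| ≤ (ε / (C + 1)) * C := by
        calc t * |h u - A| ≤ t * C := mul_le_mul_of_nonneg_left h2 ht.le
        _ ≤ (ε / (C + 1)) * C := mul_le_mul_of_nonneg_right htδ hC0
      have h5 : (ε / (C + 1)) * C < ε := by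
        rw [div_mul_eq_mul_div, div_lt_iff₀ (by linarith)]
        nlinarith
      have : z u ≤ M := Finset.le_sup' z hu
      nlinarith
  · refine ⟨1, one_pos, ?_⟩
    intro t ht _
    apply Finset.sup'_le
    intro u hu
    have huU : u ∈ U := by
      by_contra hcon
      exact hSU ⟨u, Finset.mem_sdiff.2 ⟨hu, hcon⟩⟩
    have h1 : h u ≤ A := Finset.le_sup' h huU
    have := hUz u huU
    nlinarith

lemma danskin_inf (s : Finset V) (hs : s.Nonempty) (z h : V → ℝ)
    (L : Finset V) (hLdef : L = s.filter fun u => z u = s.inf' hs z) (hL : L.Nonempty) :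
    ∃ δ > 0, ∀ t : ℝ, 0 < t → t ≤ δ →
      s.inf' hs z + t * L.inf' hL h ≤ s.inf' hs (fun u => z u + t * h u) := by
  have hsup_neg : s.sup' hs (fun u => -z u) = - s.inf' hs z := by
    rw [inf'_eq_neg_sup']; ring
  have hUdef' : L = s.filter fun u => -z u = s.sup' hs (fun u => -z u) := by
    rw [hLdef]; ext u
    rw [Finset.mem_filter, Finset.mem_filter, hsup_neg, neg_inj]
  obtain ⟨δ, hδ, hd⟩ := danskin_sup s hs (fun u => -z u) (fun u => -h u) L hUdef' hL
  refine ⟨δ, hδ, fun t ht htδ => ?_⟩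
  have h1 := hd t ht htδ
  have h2 : L.sup' hL (fun u => -h u) = - L.inf' hL h := by
    rw [inf'_eq_neg_sup']; ring
  have h3 : s.inf' hs (fun u => z u + t * h u)
      = - s.sup' hs (fun u => -z u + t * -h u) := by
    rw [inf'_eq_neg_sup']
    congr 1
    apply Finset.sup'_congr hs rfl
    intro u _; ring
  rw [h2] at h1
  rw [h3]
  linarith

lemma continuous_sup' (s : Finset V) (hs : s.Nonempty) :
    Continuous fun z : V → ℝ => s.sup' hs (fun u => z u) := by
  induction hs using Finset.Nonempty.cons_induction with
  | singleton a => simpa using continuous_apply a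
  | cons a s ha hs ih =>
      simp only [Finset.sup'_cons (H := hs)]
      exact (continuous_apply a).max ih

lemma continuous_inf' (s : Finset V) (hs : s.Nonempty) :
    Continuous fun z : V → ℝ => s.inf' hs (fun u => z u) := by
  have he : (fun z : V → ℝ => s.inf' hs (fun u => z u))
      = fun z => - s.sup' hs (fun u => - z u) := funext fun z => inf'_eq_neg_sup' s hs _
  rw [he]
  exact ((continuous_sup' s hs).comp (continuous_pi fun v => (continuous_apply v).neg)).neg

end Aux

variable (G : WHG V)

lemma isLinearMap_dot (z : V → ℝ) : IsLinearMap ℝ (fun b : V → ℝ => dot b z) := by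
  constructor
  · intro a b; simp [dot, add_mul, Finset.sum_add_distrib]
  · intro c b; simp [dot, Finset.mul_sum, mul_assoc]

lemma dot_single_sub (u v : V) (z : V → ℝ) :
    dot (Pi.single u 1 - Pi.single v 1) z = z u - z v := by
  simp only [dot, Pi.sub_apply, sub_mul, Finset.sum_sub_distrib]
  congr 1 <;> simp [Pi.single_apply, ite_mul]

lemma dot_add_left (a b h : V → ℝ) : dot (a + b) h = dot a h + dot b h := by
  simp [dot, add_mul, Finset.sum_add_distrib]

lemma dot_smul_left (r : ℝ) (a h : V → ℝ) : dot (r • a) h = r * dot a h := by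
  simp [dot, Finset.mul_sum, mul_assoc]

lemma dot_sum_left {ι : Type*} (s : Finset ι) (g : ι → V → ℝ) (h : V → ℝ) :
    dot (∑ i ∈ s, g i) h = ∑ i ∈ s, dot (g i) h := by
  simp only [dot, Finset.sum_apply, Finset.sum_mul]
  rw [Finset.sum_comm]

/-- `f_e(z)`. -/
noncomputable def fe (e : G.E) (z : V → ℝ) : ℝ :=
  (G.mem e).sup' (G.mem_nonempty e) z - (G.mem e).inf' (G.mem_nonempty e) z

lemma fe_nonneg (e : G.E) (z : V → ℝ) : 0 ≤ G.fe e z := by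
  obtain ⟨u, hu⟩ := G.mem_nonempty e
  exact sub_nonneg.2 ((Finset.inf'_le z hu).trans (Finset.le_sup' z hu))

lemma dot_le_of_mem_base (e : G.E) (z : V → ℝ) {b : V → ℝ} (hb : b ∈ G.base e) :
    dot b z ≤ G.fe e z := by
  have hconv : Convex ℝ {b : V → ℝ | dot b z ≤ G.fe e z} :=
    convex_halfSpace_le (isLinearMap_dot z) _
  refine convexHull_min ?_ hconv hb
  rintro b' ⟨u, hu, v, hv, rfl⟩
  simp only [Set.mem_setOf_eq, dot_single_sub]
  exact sub_le_sub (Finset.le_sup' z hu) (Finset.inf'_le z hv)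

lemma single_sub_mem_base (e : G.E) {u v : V} (hu : u ∈ G.mem e) (hv : v ∈ G.mem e) :
    Pi.single u 1 - Pi.single v 1 ∈ G.base e :=
  subset_convexHull ℝ _ ⟨u, hu, v, hv, rfl⟩

lemma neg_mem_base (e : G.E) {b : V → ℝ} (hb : b ∈ G.base e) : -b ∈ G.base e := by
  have h : G.base e ⊆ {b | -b ∈ G.base e} := by
    refine convexHull_min ?_ ?_
    · rintro b' ⟨u, hu, v, hv, rfl⟩
      simp only [Set.mem_setOf_eq, neg_sub]
      exact G.single_sub_mem_base e hv hu
    · have h2 : {b : V → ℝ | -b ∈ G.base e} = -(G.base e) := by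
        ext b; simp [Set.mem_neg]
      rw [h2]
      exact (convex_convexHull ℝ _).neg
  exact h hb

/-- a maximizer of `dot · z` over `base e` has value `fe e z`. -/
lemma dot_eq_fe_of_max (e : G.E) (z : V → ℝ) {b : V → ℝ} (hb : b ∈ G.base e)
    (hmax : ∀ b' ∈ G.base e, dot b' z ≤ dot b z) : dot b z = G.fe e z := by
  refine le_antisymm (G.dot_le_of_mem_base e z hb) ?_
  obtain ⟨u, hu, hsu⟩ := Finset.exists_mem_eq_sup' (G.mem_nonempty e) z
  obtain ⟨v, hv, hiv⟩ := Finset.exists_mem_eq_inf' (G.mem_nonempty e) z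
  have := hmax _ (G.single_sub_mem_base e hu hv)
  rw [dot_single_sub] at this
  rw [fe, hsu, hiv]
  exact this

noncomputable def Ffun (lam : ℝ) (x' : V → ℝ) : (V → ℝ) → ℝ := fun z =>
  lam / 2 * ∑ e : G.E, G.w e * (G.fe e z) ^ 2
    + 1 / 2 * ∑ v, (z v - x' v / G.deg v) ^ 2 * G.deg v

/-- Forward: the equation implies strict minimality. -/
lemma strict_min_of_eq (hd : ∀ v, 0 < G.deg v) (lam : ℝ) (hlam : 0 < lam) (x' : V → ℝ)
    (x : V → ℝ) (hx : ∃ y ∈ G.nLap x, x - x' = -(lam • y)) (z₂ : V → ℝ) :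
    G.Ffun lam x' (G.Dinv x) + 1 / 2 * ∑ v, (z₂ v - G.Dinv x v) ^ 2 * G.deg v
      ≤ G.Ffun lam x' z₂ := by
  obtain ⟨y, hy, heq⟩ := hx
  obtain ⟨b, hb, rfl⟩ := hy
  set z := G.Dinv x with hz
  -- pointwise equation
  have hpt : ∀ v, x v - x' v =
      -(lam * ∑ e : G.E, (G.w e * dot (b e) z) * b e v) := by
    intro v
    have := congrFun heq v
    simpa [Finset.sum_apply, Finset.mul_sum] using this
  have hval : ∀ e, dot (b e) z = G.fe e z := fun e =>
    G.dot_eq_fe_of_max e z (hb e).1 (hb e).2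
  -- per-edge inequality : fe z₂ ^2 ≥ fe z ^2 + 2 * (dot (b e) z) * dot (b e) (z₂ - z)
  have hedge : ∀ e : G.E, G.fe e z ^ 2 + 2 * dot (b e) z * dot (b e) (z₂ - z)
      ≤ G.fe e z₂ ^ 2 := by
    intro e
    have h1 : dot (b e) z₂ ≤ G.fe e z₂ := G.dot_le_of_mem_base e z₂ (hb e).1
    have h2 : -(G.fe e z₂) ≤ dot (b e) z₂ := by
      have := G.dot_le_of_mem_base e z₂ (G.neg_mem_base e (hb e).1)
      have hneg : dot (-(b e)) z₂ = -(dot (b e) z₂) := by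
        simp [dot, Finset.sum_neg_distrib]
      linarith [this, hneg ▸ this]
    have hsq : dot (b e) z₂ ^ 2 ≤ G.fe e z₂ ^ 2 := sq_le_sq' h2 h1
    have hlin : dot (b e) (z₂ - z) = dot (b e) z₂ - dot (b e) z := by
      simp [dot, mul_sub, Finset.sum_sub_distrib]
    rw [← hval e, hlin]
    nlinarith [sq_nonneg (dot (b e) z₂ - dot (b e) z)]
  -- notation
  set z' : V → ℝ := fun v => x' v / G.deg v with hz'
  set T : ℝ := ∑ e : G.E, G.w e * (dot (b e) z * dot (b e) (z₂ - z)) with hT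
  set P : ℝ := ∑ v, (z v - z' v) * (z₂ v - z v) * G.deg v with hP
  have hA : ∑ e : G.E, G.w e * G.fe e z ^ 2 + 2 * T
      ≤ ∑ e : G.E, G.w e * G.fe e z₂ ^ 2 := by
    rw [hT, Finset.mul_sum, ← Finset.sum_add_distrib]
    refine Finset.sum_le_sum fun e _ => ?_
    have := hedge e
    nlinarith [G.w_pos e, hedge e]
  have hswap : T = ∑ v, (z₂ v - z v) * ∑ e : G.E, G.w e * dot (b e) z * b e v := by
    rw [hT]
    simp only [dot, Pi.sub_apply, Finset.mul_sum, Finset.sum_mul]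
    rw [Finset.sum_comm]
    exact Finset.sum_congr rfl fun v _ => Finset.sum_congr rfl fun e _ =>
      Finset.sum_congr rfl fun u _ => by ring
  have hzd : ∀ v, (z v - z' v) * G.deg v = x v - x' v := by
    intro v
    have hdv := (hd v).ne'
    rw [hz, hz']
    simp only [Dinv]
    field_simp
  have hKey : lam * T + P = 0 := by
    rw [hswap, hP, Finset.mul_sum, ← Finset.sum_add_distrib]
    refine Finset.sum_eq_zero fun v _ => ?_
    have h1 : (z v - z' v) * (z₂ v - z v) * G.deg v = (x v - x' v) * (z₂ v - z v) := by
      rw [← hzd v]; ring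
    rw [h1, hpt v]
    ring
  have hB : ∑ v, (z₂ v - z' v) ^ 2 * G.deg v
      = ∑ v, (z v - z' v) ^ 2 * G.deg v + ∑ v, (z₂ v - z v) ^ 2 * G.deg v + 2 * P := by
    rw [hP, Finset.mul_sum, ← Finset.sum_add_distrib, ← Finset.sum_add_distrib]
    exact Finset.sum_congr rfl fun v _ => by ring
  have hlamA : lam * (∑ e : G.E, G.w e * G.fe e z ^ 2 + 2 * T)
      ≤ lam * ∑ e : G.E, G.w e * G.fe e z₂ ^ 2 :=
    mul_le_mul_of_nonneg_left hA hlam.le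
  simp only [Ffun]
  simp only [show ∀ v, x' v / G.deg v = z' v from fun _ => rfl]
  linarith


lemma Ffun_nonneg (hd : ∀ v, 0 < G.deg v) (lam : ℝ) (hlam : 0 < lam) (x' : V → ℝ)
    (z : V → ℝ) : 0 ≤ G.Ffun lam x' z := by
  have h1 : 0 ≤ ∑ e : G.E, G.w e * G.fe e z ^ 2 :=
    Finset.sum_nonneg fun e _ => mul_nonneg (G.w_pos e).le (sq_nonneg _)
  have h2 : 0 ≤ ∑ v, (z v - x' v / G.deg v) ^ 2 * G.deg v :=
    Finset.sum_nonneg fun v _ => mul_nonneg (sq_nonneg _) (hd v).le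
  have : 0 ≤ lam / 2 := by linarith
  unfold Ffun
  positivity

lemma continuous_Ffun (lam : ℝ) (x' : V → ℝ) : Continuous (G.Ffun lam x') := by
  have hfe : ∀ e : G.E, Continuous fun z : V → ℝ => G.fe e z := fun e =>
    (continuous_sup' (G.mem e) (G.mem_nonempty e)).sub
      (continuous_inf' (G.mem e) (G.mem_nonempty e))
  unfold Ffun
  refine Continuous.add (continuous_const.mul ?_) (continuous_const.mul ?_)
  · exact continuous_finset_sum _ fun e _ => continuous_const.mul ((hfe e).pow 2)
  · exact continuous_finset_sum _ fun v _ =>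
      (((continuous_apply v).sub continuous_const).pow 2).mul continuous_const

lemma exists_global_min (hd : ∀ v, 0 < G.deg v) (lam : ℝ) (hlam : 0 < lam) (x' : V → ℝ) :
    ∃ z : V → ℝ, ∀ z₂ : V → ℝ, G.Ffun lam x' z ≤ G.Ffun lam x' z₂ := by
  set z' : V → ℝ := fun v => x' v / G.deg v with hz'
  set m : ℝ := G.Ffun lam x' z' with hm
  have hm0 : 0 ≤ m := G.Ffun_nonneg hd lam hlam x' z'
  set R : V → ℝ := fun v => Real.sqrt (2 * (m + 1) / G.deg v) with hR
  set K : Set (V → ℝ) := Set.pi Set.univ fun v => Set.Icc (z' v - R v) (z' v + R v) with hK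
  have hKc : IsCompact K := isCompact_univ_pi fun v => isCompact_Icc
  have hz'K : z' ∈ K := by
    intro v _
    have : 0 ≤ R v := Real.sqrt_nonneg _
    constructor <;> simp <;> linarith
  obtain ⟨zs, hzsK, hzmin⟩ := hKc.exists_isMinOn ⟨z', hz'K⟩
    (G.continuous_Ffun lam x').continuousOn
  refine ⟨zs, fun z₂ => ?_⟩
  by_cases hz₂ : z₂ ∈ K
  · exact hzmin hz₂
  · -- some coordinate is far: F z₂ > m ≥ F zs
    have hzs : G.Ffun lam x' zs ≤ m := hzmin hz'K
    simp only [hK, Set.mem_pi, Set.mem_univ, forall_true_left, Set.mem_Icc] at hz₂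
    push_neg at hz₂
    obtain ⟨v, hv⟩ := hz₂
    have hfar : R v < |z₂ v - z' v| := by
      rcases lt_or_ge (z₂ v) (z' v - R v) with h | h
      · rw [abs_sub_comm, lt_abs]; left; linarith
      · have := hv h
        rw [lt_abs]; left; linarith
    have hRv : R v ^ 2 = 2 * (m + 1) / G.deg v := by
      rw [hR, Real.sq_sqrt (div_nonneg (by linarith) (hd v).le)]
    have hterm : 2 * (m + 1) < (z₂ v - z' v) ^ 2 * G.deg v := by
      have h1 : R v ^ 2 < (z₂ v - z' v) ^ 2 := by
        have h0 : 0 ≤ R v := Real.sqrt_nonneg _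
        nlinarith [abs_nonneg (z₂ v - z' v), sq_abs (z₂ v - z' v)]
      have := mul_lt_mul_of_pos_right h1 (hd v)
      rw [hRv] at this
      rw [div_mul_cancel₀] at this
      · linarith
      · exact (hd v).ne'
    have hlow : 1 / 2 * ((z₂ v - z' v) ^ 2 * G.deg v) ≤ G.Ffun lam x' z₂ := by
      have h1 : 0 ≤ lam / 2 * ∑ e : G.E, G.w e * G.fe e z₂ ^ 2 := by
        have h0 : (0:ℝ) ≤ ∑ e : G.E, G.w e * G.fe e z₂ ^ 2 :=
          Finset.sum_nonneg fun (e : G.E) _ =>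
            mul_nonneg (G.w_pos e).le (sq_nonneg (G.fe e z₂))
        have : (0:ℝ) ≤ lam / 2 := by linarith
        positivity
      have h2 : (z₂ v - z' v) ^ 2 * G.deg v ≤ ∑ u, (z₂ u - z' u) ^ 2 * G.deg u :=
        Finset.single_le_sum (f := fun u => (z₂ u - z' u) ^ 2 * G.deg u)
          (fun u _ => mul_nonneg (sq_nonneg _) (hd u).le) (Finset.mem_univ v)
      simp only [Ffun, show ∀ u, x' u / G.deg u = z' u from fun _ => rfl]
      linarith
    linarith

lemma eq_of_global_min (hd : ∀ v, 0 < G.deg v) (lam : ℝ) (hlam : 0 < lam) (x' : V → ℝ)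
    (zs : V → ℝ) (hmin : ∀ z₂ : V → ℝ, G.Ffun lam x' zs ≤ G.Ffun lam x' z₂) :
    ∃ x : V → ℝ, G.Dinv x = zs ∧ ∃ y ∈ G.nLap x, x - x' = -(lam • y) := by
  classical
  set Me : G.E → ℝ := fun e => (G.mem e).sup' (G.mem_nonempty e) zs with hMe
  set me : G.E → ℝ := fun e => (G.mem e).inf' (G.mem_nonempty e) zs with hme
  set fev : G.E → ℝ := fun e => Me e - me e with hfev
  set U : G.E → Finset V := fun e => (G.mem e).filter (fun u => zs u = Me e) with hU
  set L : G.E → Finset V := fun e => (G.mem e).filter (fun u => zs u = me e) with hL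
  have hUne : ∀ e, (U e).Nonempty := fun e => by
    obtain ⟨u, hu, hequ⟩ := Finset.exists_mem_eq_sup' (G.mem_nonempty e) zs
    exact ⟨u, Finset.mem_filter.2 ⟨hu, hequ.symm⟩⟩
  have hLne : ∀ e, (L e).Nonempty := fun e => by
    obtain ⟨u, hu, hequ⟩ := Finset.exists_mem_eq_inf' (G.mem_nonempty e) zs
    exact ⟨u, Finset.mem_filter.2 ⟨hu, hequ.symm⟩⟩
  set c : V → ℝ := fun v => (zs v - x' v / G.deg v) * G.deg v with hc
  set bvec : V × V → V → ℝ := fun q => Pi.single q.1 1 - Pi.single q.2 1 with hbvec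
  set gmap : (G.E → V × V) → (V → ℝ) :=
    fun p => c + lam • ∑ e : G.E, (G.w e * fev e) • bvec (p e) with hgmap
  set P : Set (G.E → V × V) := {p | ∀ e, (p e).1 ∈ U e ∧ (p e).2 ∈ L e} with hP
  set S : Set (V → ℝ) := gmap '' P with hS
  have hfe_eq : ∀ e, G.fe e zs = fev e := fun e => rfl
  have hdotg : ∀ (h : V → ℝ) (p : G.E → V × V),
      dot (gmap p) h = dot c h + lam * ∑ e : G.E,
        (G.w e * fev e) * (h (p e).1 - h (p e).2) := by
    intro h p
    rw [hgmap]
    simp only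
    rw [dot_add_left, dot_smul_left, dot_sum_left]
    have hterm : ∑ e : G.E, dot ((G.w e * fev e) • bvec (p e)) h
        = ∑ e : G.E, (G.w e * fev e) * (h (p e).1 - h (p e).2) :=
      Finset.sum_congr rfl fun e _ => by rw [dot_smul_left, hbvec, dot_single_sub]
    rw [hterm]
  -- main claim : 0 is in the convex hull of S
  have hmain : (0 : V → ℝ) ∈ convexHull ℝ S := by
    by_contra hcon
    have hSfin : S.Finite := (Set.toFinite P).image _
    have hclosed : IsClosed (convexHull ℝ S) := (hSfin.isCompact_convexHull (𝕜 := ℝ)).isClosed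
    obtain ⟨f, u, hfu, hub⟩ :=
      geometric_hahn_banach_point_closed (convex_convexHull ℝ S) hclosed hcon
    have hu0 : 0 < u := by simpa using hfu
    set h : V → ℝ := fun v => - f (Pi.single v 1) with hh
    have hfk : ∀ k : V → ℝ, f k = - dot k h := by
      intro k
      have hk : k = ∑ v, k v • (Pi.single v 1 : V → ℝ) := by
        funext v
        rw [Finset.sum_apply]
        simp [Pi.single_apply]
      conv_lhs => rw [hk]
      rw [map_sum]
      simp only [map_smul, smul_eq_mul, hh, dot]
      rw [← Finset.sum_neg_distrib]
      exact Finset.sum_congr rfl fun v _ => by ring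
    -- Danskin data
    have hDsup : ∀ e, ∃ δ > 0, ∀ t : ℝ, 0 < t → t ≤ δ →
        (G.mem e).sup' (G.mem_nonempty e) (fun u => zs u + t * h u)
          ≤ Me e + t * (U e).sup' (hUne e) h := fun e =>
      danskin_sup (G.mem e) (G.mem_nonempty e) zs h (U e) (by rw [hU]) (hUne e)
    have hDinf : ∀ e, ∃ δ > 0, ∀ t : ℝ, 0 < t → t ≤ δ →
        me e + t * (L e).inf' (hLne e) h
          ≤ (G.mem e).inf' (G.mem_nonempty e) (fun u => zs u + t * h u) := fun e =>
      danskin_inf (G.mem e) (G.mem_nonempty e) zs h (L e) (by rw [hL]) (hLne e)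
    choose δ₁ hδ₁pos hδ₁ using hDsup
    choose δ₂ hδ₂pos hδ₂ using hDinf
    -- selection
    have hsel : ∀ e, ∃ q : V × V, q.1 ∈ U e ∧ q.2 ∈ L e ∧
        (U e).sup' (hUne e) h = h q.1 ∧ (L e).inf' (hLne e) h = h q.2 := by
      intro e
      obtain ⟨a, ha, hha⟩ := Finset.exists_mem_eq_sup' (hUne e) h
      obtain ⟨bb, hbb, hhb⟩ := Finset.exists_mem_eq_inf' (hLne e) h
      exact ⟨(a, bb), ha, hbb, hha, hhb⟩
    choose p₀ hp₀1 hp₀2 hp₀3 hp₀4 using hsel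
    have hp₀P : p₀ ∈ P := fun e => ⟨hp₀1 e, hp₀2 e⟩
    have hk₀S : gmap p₀ ∈ S := ⟨p₀, hp₀P, rfl⟩
    set cE : G.E → ℝ := fun e => h (p₀ e).1 - h (p₀ e).2 with hcE
    have hk₀ : dot c h + lam * ∑ e : G.E, (G.w e * fev e) * cE e < - u := by
      have h1 := hub _ (subset_convexHull ℝ S hk₀S)
      have h2 := hfk (gmap p₀)
      have h3 := hdotg h p₀
      have hsum_eq : ∑ e : G.E, (G.w e * fev e) * cE e
          = ∑ e : G.E, (G.w e * fev e) * (h (p₀ e).1 - h (p₀ e).2) := rfl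
      rw [hsum_eq]
      linarith
    set Cq : ℝ := lam / 2 * ∑ e : G.E, G.w e * cE e ^ 2
        + 1 / 2 * ∑ v, h v ^ 2 * G.deg v with hCq
    have hCq0 : 0 ≤ Cq := by
      have h1 : (0:ℝ) ≤ ∑ e : G.E, G.w e * cE e ^ 2 :=
        Finset.sum_nonneg fun e _ => mul_nonneg (G.w_pos e).le (sq_nonneg _)
      have h2 : (0:ℝ) ≤ ∑ v, h v ^ 2 * G.deg v :=
        Finset.sum_nonneg fun v _ => mul_nonneg (sq_nonneg _) (hd v).le
      have : (0:ℝ) ≤ lam / 2 := by linarith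
      rw [hCq]; positivity
    -- uniform delta
    obtain ⟨δ, hδpos, hδle⟩ : ∃ δ > 0, ∀ e, δ ≤ min (δ₁ e) (δ₂ e) := by
      by_cases hE : Nonempty G.E
      · have hne : (Finset.univ : Finset G.E).Nonempty := Finset.univ_nonempty
        refine ⟨min 1 (Finset.univ.inf' hne fun e => min (δ₁ e) (δ₂ e)), ?_, ?_⟩
        · apply lt_min one_pos
          rw [Finset.lt_inf'_iff]
          exact fun e _ => lt_min (hδ₁pos e) (hδ₂pos e)
        · intro e
          exact (min_le_right _ _).trans (Finset.inf'_le _ (Finset.mem_univ e))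
      · exact ⟨1, one_pos, fun e => absurd ⟨e⟩ hE⟩
    set t : ℝ := min δ (u / (Cq + 1)) with htdef
    have ht0 : 0 < t := lt_min hδpos (by positivity)
    have htδ : t ≤ δ := min_le_left _ _
    -- edge bound
    have hedge : ∀ e, G.fe e (fun v => zs v + t * h v) ^ 2
        ≤ fev e ^ 2 + 2 * t * (fev e * cE e) + t ^ 2 * cE e ^ 2 := by
      intro e
      have h1 := hδ₁ e t ht0 (htδ.trans ((hδle e).trans (min_le_left _ _)))
      have h2 := hδ₂ e t ht0 (htδ.trans ((hδle e).trans (min_le_right _ _)))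
      rw [hp₀3 e] at h1
      rw [hp₀4 e] at h2
      have h3 : G.fe e (fun v => zs v + t * h v) ≤ fev e + t * cE e := by
        have : G.fe e (fun v => zs v + t * h v)
            = (G.mem e).sup' (G.mem_nonempty e) (fun u => zs u + t * h u)
              - (G.mem e).inf' (G.mem_nonempty e) (fun u => zs u + t * h u) := rfl
        rw [this, hfev, hcE]
        simp only
        linarith
      have h4 := G.fe_nonneg e (fun v => zs v + t * h v)
      nlinarith
    -- F bound
    set A1 : ℝ := ∑ e : G.E, G.w e * fev e ^ 2 with hA1
    set A2 : ℝ := ∑ e : G.E, (G.w e * fev e) * cE e with hA2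
    set A3 : ℝ := ∑ e : G.E, G.w e * cE e ^ 2 with hA3
    set B1 : ℝ := ∑ v, (zs v - x' v / G.deg v) ^ 2 * G.deg v with hB1
    set B2 : ℝ := dot c h with hB2
    set B3 : ℝ := ∑ v, h v ^ 2 * G.deg v with hB3
    have hF1 : G.Ffun lam x' zs = lam / 2 * A1 + 1 / 2 * B1 := rfl
    have hsum1 : ∑ e : G.E, G.w e * G.fe e (fun v => zs v + t * h v) ^ 2
        ≤ A1 + 2 * t * A2 + t ^ 2 * A3 := by
      rw [hA1, hA2, hA3, Finset.mul_sum, Finset.mul_sum, ← Finset.sum_add_distrib,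
        ← Finset.sum_add_distrib]
      refine Finset.sum_le_sum fun e _ => ?_
      have h1 := hedge e
      nlinarith [G.w_pos e]
    have hsum2 : ∑ v, ((fun v => zs v + t * h v) v - x' v / G.deg v) ^ 2 * G.deg v
        = B1 + 2 * t * B2 + t ^ 2 * B3 := by
      rw [hB1, hB2, hB3, dot, Finset.mul_sum, Finset.mul_sum, ← Finset.sum_add_distrib,
        ← Finset.sum_add_distrib]
      refine Finset.sum_congr rfl fun v _ => ?_
      rw [hc]
      have hdv := (hd v).ne'
      field_simp
      ring
    have hF2 : G.Ffun lam x' (fun v => zs v + t * h v)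
        ≤ G.Ffun lam x' zs + t * (B2 + lam * A2) + t ^ 2 * Cq := by
      have hexp : G.Ffun lam x' (fun v => zs v + t * h v)
          = lam / 2 * ∑ e : G.E, G.w e * G.fe e (fun v => zs v + t * h v) ^ 2
            + 1 / 2 * ∑ v, ((fun v => zs v + t * h v) v - x' v / G.deg v) ^ 2 * G.deg v := rfl
      rw [hexp, hsum2, hF1, hCq]
      have hlam2 : (0:ℝ) ≤ lam / 2 := by linarith
      nlinarith [hsum1]
    have hmin2 := hmin (fun v => zs v + t * h v)
    -- contradiction
    have hts : t * (B2 + lam * A2) + t ^ 2 * Cq < 0 := by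
      have h5 : B2 + lam * A2 < - u := hk₀
      have h6 : t * (B2 + lam * A2) < t * (-u) := by
        exact mul_lt_mul_of_pos_left h5 ht0
      have h7 : t * Cq ≤ (u / (Cq + 1)) * Cq :=
        mul_le_mul_of_nonneg_right (min_le_right _ _) hCq0
      have h8 : (u / (Cq + 1)) * Cq < u := by
        rw [div_mul_eq_mul_div, div_lt_iff₀ (by linarith)]
        nlinarith
      have h9 : t ^ 2 * Cq ≤ t * ((u / (Cq + 1)) * Cq) := by
        have : t ^ 2 * Cq = t * (t * Cq) := by ring
        rw [this]
        exact mul_le_mul_of_nonneg_left h7 ht0.le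
      have h10 : t * ((u / (Cq + 1)) * Cq) ≤ t * u := by
        apply mul_le_mul_of_nonneg_left h8.le ht0.le
      calc t * (B2 + lam * A2) + t ^ 2 * Cq
          < t * (-u) + t * u := add_lt_add_of_lt_of_le h6 (h9.trans h10)
        _ = 0 := by ring
    linarith
  -- extract the convex combination
  rw [_root_.convexHull_eq] at hmain
  obtain ⟨ι, tt, θ, zf, hθ0, hθ1, hzfS, hcm⟩ := hmain
  rw [Finset.centerMass_eq_of_sum_1 _ _ hθ1] at hcm
  have hsel2 : ∀ i ∈ tt, ∃ p, p ∈ P ∧ gmap p = zf i := by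
    intro i hi
    obtain ⟨p, hp, hgp⟩ := hzfS i hi
    exact ⟨p, hp, hgp⟩
  choose σ hσP hσg using hsel2
  set b : G.E → V → ℝ := fun e => ∑ i ∈ tt.attach, θ i.1 • bvec (σ i.1 i.2 e) with hb
  have hσU : ∀ (i : tt) e, (σ i.1 i.2 e).1 ∈ G.mem e ∧ zs (σ i.1 i.2 e).1 = Me e := by
    intro i e
    have := (hσP i.1 i.2 e).1
    rw [hU] at this
    exact Finset.mem_filter.1 this
  have hσL : ∀ (i : tt) e, (σ i.1 i.2 e).2 ∈ G.mem e ∧ zs (σ i.1 i.2 e).2 = me e := by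
    intro i e
    have := (hσP i.1 i.2 e).2
    rw [hL] at this
    exact Finset.mem_filter.1 this
  have hθattach : ∑ i ∈ tt.attach, θ i.1 = 1 := by
    rw [Finset.sum_attach tt θ]; exact hθ1
  have hbbase : ∀ e, b e ∈ G.base e := by
    intro e
    rw [hb]
    refine Convex.sum_mem (convex_convexHull ℝ _) (fun i _ => hθ0 i.1 i.2) hθattach ?_
    intro i _
    exact G.single_sub_mem_base e (hσU i e).1 (hσL i e).1
  have hbdot : ∀ e, dot (b e) zs = fev e := by
    intro e
    rw [hb, dot_sum_left]
    have : ∀ i ∈ tt.attach,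
        dot (θ i.1 • bvec (σ i.1 i.2 e)) zs = θ i.1 * fev e := by
      intro i _
      rw [dot_smul_left, hbvec, dot_single_sub,
        (hσU i e).2, (hσL i e).2, hfev]
    rw [Finset.sum_congr rfl this, ← Finset.sum_mul, hθattach, one_mul]
  -- the combination equation, pointwise
  have h4 : ∀ v, c v + lam * ∑ e : G.E, (G.w e * fev e) * b e v = 0 := by
    intro v
    have h0 : ∑ i ∈ tt, θ i * zf i v = 0 := by
      have := congrFun hcm v
      rw [Finset.sum_apply] at this
      simpa using this
    have h2 : ∀ (i : tt), zf i.1 v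
        = c v + lam * ∑ e : G.E, (G.w e * fev e) * bvec (σ i.1 i.2 e) v := by
      intro i
      rw [← hσg i.1 i.2, hgmap]
      simp only [Pi.add_apply, Pi.smul_apply, Finset.sum_apply, smul_eq_mul,
        Finset.mul_sum]
    have hattach : ∑ i ∈ tt, θ i * zf i v = ∑ i ∈ tt.attach, θ i.1 * zf i.1 v :=
      (Finset.sum_attach tt fun j => θ j * zf j v).symm
    have hbev : ∀ e, b e v = ∑ i ∈ tt.attach, θ i.1 * bvec (σ i.1 i.2 e) v := by
      intro e
      simp only [hb, Finset.sum_apply, Pi.smul_apply, smul_eq_mul]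
    have hsplit : ∑ i ∈ tt.attach, θ i.1 * zf i.1 v
        = (∑ i ∈ tt.attach, θ i.1) * c v
          + lam * ∑ i ∈ tt.attach, ∑ e : G.E,
              θ i.1 * ((G.w e * fev e) * bvec (σ i.1 i.2 e) v) := by
      rw [Finset.sum_mul, Finset.mul_sum, ← Finset.sum_add_distrib]
      refine Finset.sum_congr rfl fun i _ => ?_
      have hYc : ∑ e : G.E, θ i.1 * ((G.w e * fev e) * bvec (σ i.1 i.2 e) v)
          = θ i.1 * ∑ e : G.E, (G.w e * fev e) * bvec (σ i.1 i.2 e) v := by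
        rw [Finset.mul_sum]
      rw [h2 i, hYc]
      ring
    have hX : ∑ i ∈ tt.attach, ∑ e : G.E, θ i.1 * ((G.w e * fev e) * bvec (σ i.1 i.2 e) v)
        = ∑ e : G.E, (G.w e * fev e) * b e v := by
      rw [Finset.sum_comm]
      refine Finset.sum_congr rfl fun e _ => ?_
      rw [hbev e, Finset.mul_sum]
      exact Finset.sum_congr rfl fun i _ => by ring
    rw [hattach, hsplit, hθattach, hX, one_mul] at h0
    linarith
  -- assemble
  refine ⟨fun v => zs v * G.deg v, ?_, ?_⟩
  · funext v
    rw [Dinv]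
    exact mul_div_cancel_right₀ (zs v) (hd v).ne'
  · have hDinvx : G.Dinv (fun v => zs v * G.deg v) = zs := by
      funext v
      rw [Dinv]
      exact mul_div_cancel_right₀ (zs v) (hd v).ne'
    refine ⟨∑ e : G.E, (G.w e * dot (b e) (G.Dinv fun v => zs v * G.deg v)) • b e,
      ⟨b, ?_, rfl⟩, ?_⟩
    · intro e
      rw [hDinvx]
      refine ⟨hbbase e, fun b' hb' => ?_⟩
      rw [hbdot e]
      exact (G.dot_le_of_mem_base e zs hb').trans (le_of_eq (hfe_eq e))
    · rw [hDinvx]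
      funext v
      simp only [Pi.sub_apply, Pi.neg_apply, Pi.smul_apply, Finset.sum_apply, smul_eq_mul]
      have h5 := h4 v
      have h6 : ∑ e : G.E, G.w e * dot (b e) zs * b e v
          = ∑ e : G.E, (G.w e * fev e) * b e v :=
        Finset.sum_congr rfl fun e _ => by rw [hbdot e]
      have h7 : c v = zs v * G.deg v - x' v := by
        rw [hc]
        have hdv := (hd v).ne'
        field_simp
      rw [h6]
      linarith [h5, h7]

lemma funext_of_sum_sq (hd : ∀ v, 0 < G.deg v) {a b : V → ℝ}
    (h : ∑ v, (a v - b v) ^ 2 * G.deg v ≤ 0) : a = b := by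
  have hnn : ∀ v ∈ Finset.univ, 0 ≤ (a v - b v) ^ 2 * G.deg v :=
    fun v _ => mul_nonneg (sq_nonneg _) (hd v).le
  have hz : ∑ v, (a v - b v) ^ 2 * G.deg v = 0 :=
    le_antisymm h (Finset.sum_nonneg hnn)
  have hall := (Finset.sum_eq_zero_iff_of_nonneg hnn).1 hz
  funext v
  have hv := hall v (Finset.mem_univ v)
  have h2 : (a v - b v) ^ 2 = 0 := by
    rcases mul_eq_zero.1 hv with h' | h'
    · exact h'
    · exact absurd h' (hd v).ne'
  have h3 : a v - b v = 0 := by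
    nlinarith [sq_nonneg (a v - b v)]
  linarith

lemma eq_of_dinv_eq (hd : ∀ v, 0 < G.deg v) {a b : V → ℝ}
    (h : G.Dinv a = G.Dinv b) : a = b := by
  funext v
  have h2 := congrFun h v
  simp only [Dinv] at h2
  field_simp [(hd v).ne'] at h2
  exact h2

lemma exists_solution (hd : ∀ v, 0 < G.deg v) (lam : ℝ) (hlam : 0 < lam) (x' : V → ℝ) :
    ∃ x : V → ℝ, ∃ y ∈ G.nLap x, x - x' = -(lam • y) := by
  obtain ⟨zs, hmin⟩ := G.exists_global_min hd lam hlam x'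
  obtain ⟨x, _, hx⟩ := G.eq_of_global_min hd lam hlam x' zs hmin
  exact ⟨x, hx⟩


/-- resolvent characterization: `x − x' ∈ −λ𝓛_G(x)` iff `D⁻¹x` is the
unique minimizer of `F(z) = (λ/2)∑_e w(e) f_e(z)² + (1/2)∑_v (z(v) − (D⁻¹x')(v))² d(v)`;
in particular the resolvent equation has exactly one solution. -/
theorem resolvent_characterization {V : Type} [Fintype V] [DecidableEq V] (G : WHG V)
    (hd : ∀ v, 0 < G.deg v) (lam : ℝ) (hlam : 0 < lam) (x' : V → ℝ) :
    let F : (V → ℝ) → ℝ := fun z =>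
      lam / 2 * ∑ e : G.E, G.w e *
          ((G.mem e).sup' (G.mem_nonempty e) z - (G.mem e).inf' (G.mem_nonempty e) z) ^ 2
        + 1 / 2 * ∑ v, (z v - x' v / G.deg v) ^ 2 * G.deg v
    (∀ x : V → ℝ,
      (∃ y ∈ G.nLap x, x - x' = -(lam • y)) ↔
      (∀ z : V → ℝ, F (G.Dinv x) ≤ F z ∧ (F z = F (G.Dinv x) → z = G.Dinv x))) ∧
    (∃! x : V → ℝ, ∃ y ∈ G.nLap x, x - x' = -(lam • y)) := by
  intro F
  have hF : ∀ z, F z = G.Ffun lam x' z := fun z => rfl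
  have hsq : ∀ a b : V → ℝ, 0 ≤ ∑ v, (a v - b v) ^ 2 * G.deg v :=
    fun a b => Finset.sum_nonneg fun v _ => mul_nonneg (sq_nonneg _) (hd v).le
  constructor
  · intro x
    constructor
    · intro hx z
      have hkey := G.strict_min_of_eq hd lam hlam x' x hx z
      have hnn := hsq z (G.Dinv x)
      constructor
      · rw [hF, hF]; linarith
      · intro heq
        rw [hF, hF] at heq
        exact G.funext_of_sum_sq hd (by linarith)
    · intro hmin
      obtain ⟨x₀, hx₀⟩ := G.exists_solution hd lam hlam x'
      have h1 : G.Ffun lam x' (G.Dinv x₀) ≤ G.Ffun lam x' (G.Dinv x) := by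
        have := G.strict_min_of_eq hd lam hlam x' x₀ hx₀ (G.Dinv x)
        have hnn := hsq (G.Dinv x) (G.Dinv x₀)
        linarith
      have h2 := (hmin (G.Dinv x₀)).1
      have h3 := (hmin (G.Dinv x₀)).2
      rw [hF, hF] at h2 h3
      have heq : G.Dinv x₀ = G.Dinv x := h3 (le_antisymm h1 h2)
      have hxeq : x₀ = x := G.eq_of_dinv_eq hd heq
      rw [← hxeq]
      exact hx₀
  · obtain ⟨x₀, hx₀⟩ := G.exists_solution hd lam hlam x'
    refine ⟨x₀, hx₀, ?_⟩
    intro x hx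
    have h1 := G.strict_min_of_eq hd lam hlam x' x hx (G.Dinv x₀)
    have h2 := G.strict_min_of_eq hd lam hlam x' x₀ hx₀ (G.Dinv x)
    have hnn1 := hsq (G.Dinv x₀) (G.Dinv x)
    have hnn2 := hsq (G.Dinv x) (G.Dinv x₀)
    have heq : G.Dinv x = G.Dinv x₀ := G.funext_of_sum_sq hd (by linarith)
    exact G.eq_of_dinv_eq hd heq

end WHG
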